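/- Let p = 2 and let a be the binary adding machine (odometer) on (ZMod 2)^ℕ. Then f_0 ∘ a⁻¹ = f_0, and for every n ≥ 1 and every x ∈ (ZMod 2)^ℕ one has f_n(a⁻¹(x)) = f_n(x) + f_{n−1}(x). In other words, the matrix of the adding machine in the ordered basis (f_0, f_1, f_2, …) is the infinite Jordan cell with 1's on the main diagonal and on the first superdiagonal and 0's elsewhere. -/

import Mathlib

/-- For `p = 2`: `b_0 = 1` (the constant one function) and `b_1 = δ_0`,
i.e. `b_1(t) = 1 + t`. -/
def bFun2 : ℕ → ZMod 2 → ZMod 2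
  | 0 => fun _ => 1
  | _ + 1 => fun t => 1 + t

/-- `f_n(x) = Π_i b_{k_i}(x_i)`, where `k_0, k_1, …` are the binary digits of `n`
(the digit `k_i = n / 2^i % 2` vanishes for `i > n`, so the product below captures all of
them; the remaining factors equal `b_0 = 1`). -/
def fBasis2 (n : ℕ) : (ℕ → ZMod 2) → ZMod 2 :=
  fun x => ∏ i ∈ Finset.range (n + 1), bFun2 (n / 2 ^ i % 2) (x i)

open Finset

lemma bFun2_at_zero (e : ℕ) : bFun2 e 0 = 1 := by cases e <;> simp [bFun2]

lemma bFun2_one_one : bFun2 1 1 = 0 := by decide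

lemma fBasis2_pad (n M : ℕ) (h : n + 1 ≤ M) (z : ℕ → ZMod 2) :
    fBasis2 n z = ∏ i ∈ range M, bFun2 (n / 2 ^ i % 2) (z i) := by
  unfold fBasis2
  refine prod_subset (range_subset_range.2 h) fun i _ hi => ?_
  have h2 : n < 2 ^ i := by
    calc n < 2 ^ (n + 1) := Nat.lt_of_lt_of_le (Nat.lt_succ_self n) (Nat.le_of_lt (Nat.lt_pow_self (n := n + 1) (by norm_num)))
    _ ≤ 2 ^ i := Nat.pow_le_pow_right (by norm_num) (by simpa using hi)
  rw [Nat.div_eq_of_lt h2]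
  simp [bFun2]

lemma prod_split (g : ℕ → ZMod 2) (k M : ℕ) (h : k + 1 ≤ M) :
    ∏ i ∈ range M, g i = ((∏ i ∈ range k, g i) * g k) * ∏ i ∈ Ico (k + 1) M, g i := by
  rw [range_eq_Ico, ← prod_Ico_consecutive g (Nat.zero_le (k + 1)) h, ← range_eq_Ico,
    prod_range_succ]

lemma allzero_dvd (n k : ℕ) (h : ∀ i < k, n / 2 ^ i % 2 = 0) : n % 2 ^ k = 0 := by
  induction k with
  | zero => simp at h ⊢; omega
  | succ k ih =>
    have h1 : n % 2 ^ k = 0 := ih fun i hi => h i (hi.trans (Nat.lt_succ_self k))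
    obtain ⟨t, rfl⟩ := Nat.dvd_of_mod_eq_zero h1
    have h2 : 2 ^ k * t / 2 ^ k % 2 = 0 := h k (Nat.lt_succ_self k)
    rw [Nat.mul_div_cancel_left _ (Nat.two_pow_pos k)] at h2
    obtain ⟨s, rfl⟩ := Nat.dvd_of_mod_eq_zero h2
    have : 2 ^ (k+1) * s = 2 ^ k * (2 * s) := by ring
    rw [← this]
    exact Nat.mul_mod_right _ _

lemma exists_digit (n k : ℕ) (h : n % 2 ^ k ≠ 0) : ∃ i, i < k ∧ n / 2 ^ i % 2 = 1 := by
  by_contra hc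
  push_neg at hc
  refine h (allzero_dvd n k fun i hi => ?_)
  have h1 := hc i hi
  have h2 : n / 2 ^ i % 2 < 2 := Nat.mod_lt _ (by norm_num)
  omega

lemma dvd_digits_zero (n k : ℕ) (h : n % 2 ^ k = 0) (i : ℕ) (hi : i < k) :
    n / 2 ^ i % 2 = 0 := by
  obtain ⟨t, rfl⟩ := Nat.dvd_of_mod_eq_zero h
  have hik : i + 1 ≤ k := hi
  have h1 : 2 ^ k * t = 2 ^ i * (2 * (2 ^ (k - i - 1) * t)) := by
    rw [← mul_assoc, ← mul_assoc, ← pow_succ, ← pow_add]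
    congr 2
    omega
  rw [h1, Nat.mul_div_cancel_left _ (Nat.two_pow_pos i), Nat.mul_mod_right]

lemma mul_sub_one_div (a m : ℕ) (ha : 0 < a) (hm : 0 < m) : (a * m - 1) / a = m - 1 := by
  have h2 : a * (m - 1) = a * m - a := Nat.mul_sub_one a m
  have h3 : a ≤ a * m := Nat.le_mul_of_pos_right a hm
  have h1 : a * m - 1 = a * (m - 1) + (a - 1) := by omega
  rw [h1, Nat.mul_add_div ha, Nat.div_eq_of_lt (by omega)]
  omega

lemma pred_div_eq (n d : ℕ) (hd : ¬ d ∣ n) : (n - 1) / d = n / d := by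
  have hn : n ≠ 0 := by rintro rfl; exact hd (dvd_zero d)
  have h := Nat.succ_div (a := n - 1) (b := d)
  rw [Nat.sub_add_cancel (Nat.one_le_iff_ne_zero.mpr hn)] at h
  simp [hd] at h
  omega

/-- for the binary adding machine `a` (the odometer on `(ZMod 2)^ℕ`),
`f_0 ∘ a⁻¹ = f_0` and `f_n ∘ a⁻¹ = f_n + f_{n−1}` for all `n ≥ 1`; i.e. the matrix of
the adding machine in the ordered basis `(f_0, f_1, f_2, …)` is the infinite Jordan cell
with `1`s on the main diagonal and the first superdiagonal and `0`s elsewhere. -/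
theorem addingMachine_jordan_cell
    (a : Equiv.Perm (ℕ → ZMod 2))
    (ha : ∀ (x : ℕ → ZMod 2) (k : ℕ), (∀ i < k, x i = 1) → x k = 0 →
      ((∀ i < k, a x i = 0) ∧ a x k = 1 ∧ ∀ i, k < i → a x i = x i))
    (hone : a (fun _ => 1) = fun _ => 0) :
    ((fun x => fBasis2 0 (a.symm x)) = fBasis2 0) ∧
    ∀ n : ℕ, 1 ≤ n → ∀ x : ℕ → ZMod 2,
      fBasis2 n (a.symm x) = fBasis2 n x + fBasis2 (n - 1) x := by
  constructor
  · funext x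
    simp [fBasis2, bFun2]
  · intro n hn x
    have hzm : ∀ z : ZMod 2, z ≠ 1 → z = 0 := by decide
    have hzm' : ∀ z : ZMod 2, z ≠ 0 → z = 1 := by decide
    set y := a.symm x with hy
    have hx : x = a y := (a.apply_symm_apply x).symm
    by_cases hall : ∀ i, y i = 1
    · -- y is all ones, x = a y = 0
      have hy1 : y = fun _ => 1 := funext hall
      have hx0 : x = fun _ => 0 := by rw [hx, hy1, hone]
      have h1 : fBasis2 n y = 0 := by
        have hne : n % 2 ^ (n + 1) ≠ 0 := by
          rw [Nat.mod_eq_of_lt (Nat.lt_of_lt_of_le (Nat.lt_succ_self n)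
            (Nat.le_of_lt (Nat.lt_pow_self (n := n + 1) (by norm_num))))]
          omega
        obtain ⟨j, hj, hdj⟩ := exists_digit n (n + 1) hne
        unfold fBasis2
        refine Finset.prod_eq_zero (Finset.mem_range.2 hj) ?_
        rw [hdj, hall j, bFun2_one_one]
      have h2 : fBasis2 n x = 1 := by
        unfold fBasis2
        rw [hx0]
        exact Finset.prod_eq_one fun i _ => bFun2_at_zero _
      have h3 : fBasis2 (n - 1) x = 1 := by
        unfold fBasis2
        rw [hx0]
        exact Finset.prod_eq_one fun i _ => bFun2_at_zero _
      rw [h1, h2, h3]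
      decide
    · push_neg at hall
      obtain ⟨i0, hi0⟩ := hall
      have hex : ∃ k, y k = 0 := ⟨i0, hzm _ hi0⟩
      set k := Nat.find hex with hk
      have hyk : y k = 0 := Nat.find_spec hex
      have hylt : ∀ i < k, y i = 1 := fun i hi => hzm' _ (Nat.find_min hex hi)
      obtain ⟨hx1, hx2, hx3⟩ := ha y k hylt hyk
      rw [← hx] at hx1 hx2 hx3
      set M := n + k + 2 with hM
      have hM1 : n + 1 ≤ M := by omega
      have hM2 : n - 1 + 1 ≤ M := by omega
      have hMk : k + 1 ≤ M := by omega
      rw [fBasis2_pad n M hM1 y, fBasis2_pad n M hM1 x, fBasis2_pad (n - 1) M hM2 x,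
        prod_split _ k M hMk, prod_split _ k M hMk, prod_split _ k M hMk]
      -- tail products over x agree with those over y
      have hTail : ∀ c : ℕ → ℕ, (∏ i ∈ Ico (k + 1) M, bFun2 (c i) (y i)) =
          ∏ i ∈ Ico (k + 1) M, bFun2 (c i) (x i) := by
        intro c
        refine prod_congr rfl fun i hi => ?_
        rw [hx3 i (mem_Ico.1 hi).1]
      -- low products over x are 1
      have hLow : ∀ c : ℕ → ℕ, (∏ i ∈ range k, bFun2 (c i) (x i)) = 1 := by
        intro c
        refine prod_eq_one fun i hi => ?_
        rw [hx1 i (mem_range.1 hi), bFun2_at_zero]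
      rw [hTail, hLow, hLow, hyk, bFun2_at_zero, hx2]
      set T := ∏ i ∈ Ico (k + 1) M, bFun2 (n / 2 ^ i % 2) (x i) with hT
      set T' := ∏ i ∈ Ico (k + 1) M, bFun2 ((n - 1) / 2 ^ i % 2) (x i) with hT'
      have hchar : ∀ u : ZMod 2, u + u = 0 := by decide
      by_cases hL : n % 2 ^ k = 0
      · have hAy : (∏ i ∈ range k, bFun2 (n / 2 ^ i % 2) (y i)) = 1 := by
          refine prod_eq_one fun i hi => ?_
          rw [dvd_digits_zero n k hL i (mem_range.1 hi)]
          rfl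
        rw [hAy]
        by_cases hd : n / 2 ^ k % 2 = 0
        · -- case 3: digit k of n is 0 as well, so 2^(k+1) ∣ n
          have hdvd : n % 2 ^ (k + 1) = 0 := by
            rw [pow_succ, Nat.mod_mul, hL, hd]
            simp
          obtain ⟨q, hq⟩ := Nat.dvd_of_mod_eq_zero hdvd
          have hq1 : 1 ≤ q := by
            rcases Nat.eq_zero_or_pos q with h | h
            · rw [h, mul_zero] at hq; omega
            · exact h
          have hnq : n = 2 ^ k * (2 * q) := by rw [hq]; ring
          have hdk1 : (n - 1) / 2 ^ k % 2 = 1 := by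
            rw [hnq, mul_sub_one_div _ _ (Nat.two_pow_pos k) (by omega)]
            omega
          have hfn1 : bFun2 ((n - 1) / 2 ^ k % 2) (1 : ZMod 2) = 0 := by
            rw [hdk1]; exact bFun2_one_one
          rw [hd, hfn1]
          show (1 : ZMod 2) * 1 * T = 1 * bFun2 0 1 * T + 1 * 0 * T'
          simp [bFun2]
        · -- case 2: digit k of n is 1
          have hd1 : n / 2 ^ k % 2 = 1 := by
            have : n / 2 ^ k % 2 < 2 := Nat.mod_lt _ (by norm_num)
            omega
          have hmod : n % 2 ^ (k + 1) = 2 ^ k := by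
            rw [pow_succ, Nat.mod_mul, hL, hd1]
            omega
          have hq := Nat.div_add_mod n (2 ^ (k + 1))
          set q := n / 2 ^ (k + 1) with hqdef
          have hnq : n = 2 ^ k * (2 * q + 1) := by
            rw [← hq, hmod, pow_succ]; ring
          have hdk1 : (n - 1) / 2 ^ k % 2 = 0 := by
            rw [hnq, mul_sub_one_div _ _ (Nat.two_pow_pos k) (by omega)]
            omega
          have hdig : ∀ i, k < i → (n - 1) / 2 ^ i = n / 2 ^ i := by
            intro i hi
            refine pred_div_eq n (2 ^ i) fun hdvd => ?_
            have h0 : n % 2 ^ (k + 1) = 0 :=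
              Nat.mod_eq_zero_of_dvd ((pow_dvd_pow 2 hi).trans hdvd)
            rw [hmod] at h0
            exact Nat.pos_iff_ne_zero.mp (Nat.two_pow_pos k) h0
          have hTT : T' = T := by
            rw [hT, hT']
            refine prod_congr rfl fun i hi => ?_
            rw [hdig i (by have := (mem_Ico.1 hi).1; omega)]
          rw [hTT, hd1, hdk1, bFun2_one_one]
          show (1 : ZMod 2) * 1 * T = 1 * 0 * T + 1 * bFun2 0 1 * T
          simp [bFun2]
      · -- case 1: some low digit of n is 1
        obtain ⟨j, hj, hdj⟩ := exists_digit n k hL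
        have hAy : (∏ i ∈ range k, bFun2 (n / 2 ^ i % 2) (y i)) = 0 := by
          refine prod_eq_zero (mem_range.2 hj) ?_
          rw [hdj, hylt j hj, bFun2_one_one]
        have hdig : ∀ i, k ≤ i → (n - 1) / 2 ^ i = n / 2 ^ i := by
          intro i hi
          refine pred_div_eq n (2 ^ i) fun hdvd => ?_
          exact hL (Nat.mod_eq_zero_of_dvd ((pow_dvd_pow 2 hi).trans hdvd))
        have hTT : T' = T := by
          rw [hT, hT']
          refine prod_congr rfl fun i hi => ?_
          rw [hdig i (by have := (mem_Ico.1 hi).1; omega)]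
        rw [hAy, hTT, hdig k le_rfl]
        simp [hchar]
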